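/- Let (X, ω) be a complex Hermitian manifold of dimension n, let r satisfy 1 ≤ r and 2r ≤ n, and let ζ be a smooth (r,r)-form. Writing (Λ_ω^{r-1}ζ)_prim for the primitive component of the (1,1)-form Λ_ω^{r-1}ζ in its Lefschetz decomposition Λ_ω^{r-1}ζ = (Λ_ω^{r-1}ζ)_prim + (1/n)(Λ_ω^r ζ)·ω, one has ζ_prim^{(r-1)} = ((n-r-1)!/((n-2)!·(r-1)!)) · (Λ_ω^{r-1}ζ)_prim. -/
import Mathlib


open Finset

/-- Corollary 3.3, stated abstractly (same Lefschetz setting as Lemma 3.2): if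
`ζ` is an `(r,r)`-form (`1 ≤ r`, `2r ≤ n`) with Lefschetz decomposition
`ζ = ∑_{l=0}^r L^l(ζ_prim^{(l)})`, and if
`Λ^{r-1}ζ = (Λ^{r-1}ζ)_prim + (1/n)(Λ^rζ)·ω` is the Lefschetz decomposition of
the `(1,1)`-form `Λ^{r-1}ζ` with primitive part `q`, then
`ζ_prim^{(r-1)} = ((n-r-1)!/((n-2)!·(r-1)!)) · (Λ^{r-1}ζ)_prim`. -/
theorem stmt_11 {M : Type*} [AddCommGroup M] [Module ℂ M]
    (n r : ℕ) (hr : 1 ≤ r) (hrn : 2 * r ≤ n)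
    (Deg : ℤ → Submodule ℂ M)
    (L Lam : Module.End ℂ M)
    (hL : ∀ (k : ℤ), ∀ v ∈ Deg k, L v ∈ Deg (k + 2))
    (hLam : ∀ (k : ℤ), ∀ v ∈ Deg k, Lam v ∈ Deg (k - 2))
    (hcomm : ∀ (s : ℕ) (k : ℤ), ∀ v ∈ Deg k,
      (L ^ s) (Lam v) - Lam ((L ^ s) v)
        = ((s : ℂ) * ((k : ℂ) - (n : ℂ) + (s : ℂ) - 1)) • (L ^ (s - 1)) v)
    (ζ : M) (p : ℕ → M)
    (hprim : ∀ l, Lam (p l) = 0)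
    (hdeg : ∀ l : ℕ, p l ∈ Deg (2 * ((r : ℤ) - (l : ℤ))))
    (hdec : ζ = ∑ l ∈ Finset.range (r + 1), (L ^ l) (p l))
    (q : M) (hq : Lam q = 0)
    (hdecq : (Lam ^ (r - 1)) ζ = q + ((n : ℂ))⁻¹ • L ((Lam ^ r) ζ)) :
    p (r - 1) = ((Nat.factorial (n - r - 1) : ℂ) /
        ((Nat.factorial (n - 2) : ℂ) * (Nat.factorial (r - 1) : ℂ))) • q := by
  classical
  -- single-step lemma
  have key : ∀ (k : ℤ) (v : M), v ∈ Deg k → Lam v = 0 → ∀ t : ℕ,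
      Lam ((L ^ t) v) = ((t : ℂ) * ((n : ℂ) + 1 - (t : ℂ) - (k : ℂ))) • (L ^ (t - 1)) v := by
    intro k v hv hvp t
    have h := hcomm t k v hv
    rw [hvp, map_zero, zero_sub] at h
    have h2 := neg_eq_iff_eq_neg.mp h
    rw [h2, ← neg_smul]
    congr 1; ring
  -- iterated lemma
  have iter : ∀ (k : ℤ) (v : M), v ∈ Deg k → Lam v = 0 → ∀ (l m : ℕ), m ≤ l →
      (Lam ^ m) ((L ^ l) v)
        = (∏ i ∈ Finset.range m,
            (((l : ℂ) - (i : ℂ)) * ((n : ℂ) + 1 - ((l : ℂ) - (i : ℂ)) - (k : ℂ)))) •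
          (L ^ (l - m)) v := by
    intro k v hv hvp l m
    induction m with
    | zero => intro _; simp
    | succ m ih =>
      intro hm
      have hm' : m ≤ l := by omega
      rw [pow_succ', Module.End.mul_apply, ih hm', map_smul, key k v hv hvp (l - m),
        smul_smul, Finset.prod_range_succ]
      congr 1
      rw [Nat.cast_sub hm']
  have vanish : ∀ (k : ℤ) (v : M), v ∈ Deg k → Lam v = 0 → ∀ (l m : ℕ), l < m →
      (Lam ^ m) ((L ^ l) v) = 0 := by
    intro k v hv hvp l m hlm
    have h1 : (Lam ^ (l + 1)) ((L ^ l) v) = 0 := by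
      rw [pow_succ', Module.End.mul_apply, iter k v hv hvp l l le_rfl, map_smul]
      simp [hvp]
    have hm : m = (m - (l + 1)) + (l + 1) := by omega
    rw [hm, pow_add, Module.End.mul_apply, h1, map_zero]
  obtain ⟨s, rfl⟩ : ∃ s, r = s + 1 := ⟨r - 1, by omega⟩
  simp only [Nat.add_sub_cancel] at hdecq ⊢
  have hns : s + 1 ≤ n - s - 1 := by omega
  have hn0 : (n : ℂ) ≠ 0 := by
    have : 0 < n := by omega
    exact_mod_cast this.ne'
  set A : ℂ := ∏ i ∈ Finset.range s,
      ((((s : ℂ) + 1) - (i : ℂ)) * ((n : ℂ) + 1 - (((s : ℂ) + 1) - (i : ℂ)))) with hA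
  set B : ℂ := ∏ i ∈ Finset.range s,
      (((s : ℂ) - (i : ℂ)) * ((n : ℂ) - 1 - ((s : ℂ) - (i : ℂ)))) with hB
  -- Λ^s ζ
  have hsum1 : (Lam ^ s) ζ = B • p s + A • L (p (s + 1)) := by
    rw [hdec, map_sum, Finset.sum_range_succ, Finset.sum_range_succ]
    have hz : ∀ l ∈ Finset.range s, (Lam ^ s) ((L ^ l) (p l)) = 0 := by
      intro l hl
      exact vanish _ _ (hdeg l) (hprim l) l s (Finset.mem_range.mp hl)
    rw [Finset.sum_eq_zero hz, zero_add]
    rw [iter _ _ (hdeg s) (hprim s) s s le_rfl,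
      iter _ _ (hdeg (s + 1)) (hprim (s + 1)) (s + 1) s (by omega)]
    congr 1
    · congr 1
      · apply Finset.prod_congr rfl
        intro i hi
        push_cast
        ring
      · simp
    · congr 1
      · apply Finset.prod_congr rfl
        intro i hi
        push_cast
        ring
      · rw [Nat.add_sub_cancel_left, pow_one]
  -- Λ^{s+1} ζ
  have hsum2 : (Lam ^ (s + 1)) ζ = ((n : ℂ) * A) • p (s + 1) := by
    rw [hdec, map_sum, Finset.sum_range_succ]
    have hz : ∀ l ∈ Finset.range (s + 1), (Lam ^ (s + 1)) ((L ^ l) (p l)) = 0 := by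
      intro l hl
      exact vanish _ _ (hdeg l) (hprim l) l (s + 1) (Finset.mem_range.mp hl)
    rw [Finset.sum_eq_zero hz, zero_add,
      iter _ _ (hdeg (s + 1)) (hprim (s + 1)) (s + 1) (s + 1) le_rfl]
    congr 1
    · rw [Finset.prod_range_succ]
      have h1 : (((s + 1 : ℕ) : ℂ) - ((s : ℕ) : ℂ)) = 1 := by push_cast; ring
      rw [mul_comm]
      congr 1
      · push_cast
        ring
      · apply Finset.prod_congr rfl
        intro i hi
        push_cast
        ring
    · simp
  -- deduce q = B • p s
  have hqB : q = B • p s := by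
    have h := hdecq
    rw [hsum1, hsum2, map_smul, smul_smul] at h
    have hc : (n : ℂ)⁻¹ * ((n : ℂ) * A) = A := by field_simp
    rw [hc] at h
    exact (add_right_cancel h).symm
  -- B as a natural number
  have hBnat : B = ((∏ i ∈ Finset.range s, (i + 1) * (n - 2 - i) : ℕ) : ℂ) := by
    rw [hB, Nat.cast_prod, ← Finset.prod_range_reflect]
    apply Finset.prod_congr rfl
    intro i hi
    have hi' : i < s := Finset.mem_range.mp hi
    have h1 : ((s - 1 - i : ℕ) : ℂ) = (s : ℂ) - 1 - (i : ℂ) := by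
      rw [Nat.cast_sub (by omega : i ≤ s - 1), Nat.cast_sub (by omega : 1 ≤ s)]
      push_cast; ring
    have h2 : ((n - 2 - i : ℕ) : ℂ) = (n : ℂ) - 2 - (i : ℂ) := by
      rw [Nat.cast_sub (by omega : i ≤ n - 2), Nat.cast_sub (by omega : 2 ≤ n)]
      push_cast; ring
    rw [h1, Nat.cast_mul, h2]
    push_cast; ring
  -- factorial identity
  have hfact : (∏ i ∈ Finset.range s, (i + 1) * (n - 2 - i)) * (n - (s + 1) - 1).factorial
      = (n - 2).factorial * s.factorial := by
    rw [Finset.prod_mul_distrib, Finset.prod_range_add_one_eq_factorial,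
      ← Nat.descFactorial_eq_prod_range]
    have h1 : n - (s + 1) - 1 = (n - 2) - s := by omega
    rw [h1, mul_right_comm, mul_assoc,
      Nat.factorial_mul_descFactorial (by omega : s ≤ n - 2), mul_comm]
  -- conclude
  have hBne : B ≠ 0 := by
    rw [hBnat]
    have : 0 < ∏ i ∈ Finset.range s, (i + 1) * (n - 2 - i) := by
      apply Finset.prod_pos
      intro i hi
      have := Finset.mem_range.mp hi
      have : 0 < n - 2 - i := by omega
      positivity
    exact_mod_cast this.ne'
  rw [hqB, smul_smul]
  rw [show ((Nat.factorial (n - (s + 1) - 1) : ℂ) /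
        ((Nat.factorial (n - 2) : ℂ) * (Nat.factorial s : ℂ))) * B = 1 from ?_]
  · rw [one_smul]
  · rw [hBnat]
    have hcast : ((∏ i ∈ Finset.range s, (i + 1) * (n - 2 - i) : ℕ) : ℂ)
        * ((Nat.factorial (n - (s + 1) - 1) : ℂ))
        = ((Nat.factorial (n - 2) : ℂ)) * ((Nat.factorial s : ℂ)) := by
      exact_mod_cast congrArg (Nat.cast : ℕ → ℂ) hfact
    have hf1 : ((Nat.factorial (n - 2) : ℂ)) ≠ 0 := by
      exact_mod_cast (Nat.factorial_pos _).ne'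
    have hf2 : ((Nat.factorial s : ℂ)) ≠ 0 := by
      exact_mod_cast (Nat.factorial_pos _).ne'
    rw [Nat.cast_prod] at hcast
    push_cast at hcast ⊢
    field_simp
    linear_combination hcast
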